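/- If f is a color-preserving isomorphism between the colored graphs (Sd1(K1), dim) and (Sd1(K2), dim) of two finite abstract simplicial complexes K1 and K2, then there exists an isomorphism f0 between the simplicial complexes K1 and K2 such that for every vertex a of K1 the map f sends the vertex {a} of Sd1(K1) to the vertex {f0(a)} of Sd1(K2). -/

import Mathlib

open Finset

/-- A finite abstract simplicial complex on a vertex type `V`: a finite family of
finite sets that is closed under taking subsets (and contains the empty set). -/
structure AbstractComplex (V : Type*) [DecidableEq V] where
  simplices : Finset (Finset V)
  empty_mem : ∅ ∈ simplices
  downClosed : ∀ σ ∈ simplices, ∀ τ ⊆ σ, τ ∈ simplices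

namespace AbstractComplex

variable {V : Type*} [DecidableEq V]

/-- The vertices of a complex `K`: the elements appearing in singletons of `K`. -/
def Vert (K : AbstractComplex V) : Type _ := {a : V // ({a} : Finset V) ∈ K.simplices}

/-- The vertices of `Sd1 K`: the nonempty simplices of `K`. -/
def SdVert (K : AbstractComplex V) : Type _ :=
  {σ : Finset V // σ ∈ K.simplices ∧ σ.Nonempty}

/-- The 1-skeleton of the barycentric subdivision of `K`: vertices are the nonempty
simplices of `K`, and two simplices are adjacent iff one is a proper subset of
the other. -/
def Sd1 (K : AbstractComplex V) : SimpleGraph (SdVert K) where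
  Adj σ τ := σ.1 ⊂ τ.1 ∨ τ.1 ⊂ σ.1
  symm := ⟨fun _ _ h => h.symm⟩
  loopless := ⟨fun σ h => by
    rcases h with h | h <;> exact (ssubset_irrefl σ.1) h⟩

/-- The coloring `dim` on the vertices of `Sd1 K`: a simplex `σ` gets
color `|σ| - 1`. -/
def dimColor (K : AbstractComplex V) (σ : K.SdVert) : ℕ := σ.1.card - 1

end AbstractComplex

/-- `f` is an isomorphism between the simplicial complexes `K1` and `K2`:
a bijection between the vertices such that a finite set `{v₁, …, v_k}` of vertices
is a simplex of `K1` precisely when `{f v₁, …, f v_k}` is a simplex of `K2`. -/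
def IsComplexIso {V1 V2 : Type*} [DecidableEq V1] [DecidableEq V2]
    (K1 : AbstractComplex V1) (K2 : AbstractComplex V2)
    (f : K1.Vert ≃ K2.Vert) : Prop :=
  ∀ s : Finset K1.Vert,
    s.image (fun a => a.1) ∈ K1.simplices ↔
      s.image (fun a => (f a).1) ∈ K2.simplices

/-- If `φ` is a color-preserving isomorphism between the colored graphs
`(Sd1 K1, dim)` and `(Sd1 K2, dim)`, then there is an isomorphism `f0` between the
simplicial complexes `K1` and `K2` such that `φ` sends the vertex `{a}` of
`Sd1 K1` to the vertex `{f0 a}` of `Sd1 K2`, for every vertex `a` of `K1`. -/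
instance {V : Type*} [DecidableEq V] (K : AbstractComplex V) : DecidableEq K.Vert :=
  fun a b => decidable_of_iff (a.1 = b.1) Subtype.ext_iff.symm

lemma aux_exists {V1 V2 : Type*} [DecidableEq V1] [DecidableEq V2]
    (K1 : AbstractComplex V1) (K2 : AbstractComplex V2)
    (φ : K1.Sd1 ≃g K2.Sd1)
    (hφ : ∀ v, K2.dimColor (φ v) = K1.dimColor v) :
    ∃ F : K1.Vert → K2.Vert,
      (∀ a : K1.Vert, (φ ⟨({a.1} : Finset V1), a.2, Finset.singleton_nonempty a.1⟩).1
          = ({(F a).1} : Finset V2)) ∧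
      (∀ s : Finset K1.Vert, s.image (fun a => a.1) ∈ K1.simplices →
          s.image (fun a => (F a).1) ∈ K2.simplices) := by
  have hcard : ∀ v : K1.SdVert, (φ v).1.card = v.1.card := by
    intro v
    have h1 := hφ v
    have h2 : 1 ≤ (φ v).1.card := Finset.card_pos.2 (φ v).2.2
    have h3 : 1 ≤ v.1.card := Finset.card_pos.2 v.2.2
    unfold AbstractComplex.dimColor at h1
    omega
  have hsing : ∀ a : K1.Vert, ∃ b : K2.Vert,
      (φ ⟨({a.1} : Finset V1), a.2, Finset.singleton_nonempty a.1⟩).1 = {b.1} := by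
    intro a
    set w := φ ⟨({a.1} : Finset V1), a.2, Finset.singleton_nonempty a.1⟩ with hw
    have hw1 : w.1.card = 1 := (hcard _).trans (Finset.card_singleton _)
    obtain ⟨b, hb⟩ := Finset.card_eq_one.1 hw1
    have hbmem : ({b} : Finset V2) ∈ K2.simplices := hb ▸ w.2.1
    exact ⟨⟨b, hbmem⟩, hb⟩
  choose F hF using hsing
  refine ⟨F, hF, ?_⟩
  have hmain : ∀ (σ : K1.SdVert) (a : K1.Vert), a.1 ∈ σ.1 → (F a).1 ∈ (φ σ).1 := by
    intro σ a ha
    by_cases hc : σ.1 = {a.1}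
    · have hσ : σ = ⟨({a.1} : Finset V1), a.2, Finset.singleton_nonempty a.1⟩ :=
        Subtype.ext hc
      rw [hσ, hF]; simp
    · have hsub : ({a.1} : Finset V1) ⊆ σ.1 := Finset.singleton_subset_iff.2 ha
      have hss : ({a.1} : Finset V1) ⊂ σ.1 :=
        lt_of_le_of_ne hsub (fun h => hc h.symm)
      have hadj : K1.Sd1.Adj ⟨({a.1} : Finset V1), a.2, Finset.singleton_nonempty a.1⟩ σ :=
        Or.inl hss
      have hadj2 : K2.Sd1.Adj (φ ⟨({a.1} : Finset V1), a.2, Finset.singleton_nonempty a.1⟩)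
          (φ σ) := φ.map_rel_iff.2 hadj
      rcases hadj2 with h | h
      · have : ({(F a).1} : Finset V2) ⊆ (φ σ).1 := by rw [← hF a]; exact h.subset
        exact Finset.singleton_subset_iff.1 this
      · exfalso
        have h1 : (φ σ).1.card < (φ ⟨({a.1} : Finset V1), a.2,
            Finset.singleton_nonempty a.1⟩).1.card := Finset.card_lt_card h
        rw [hF a] at h1
        have h2 : 1 ≤ (φ σ).1.card := Finset.card_pos.2 (φ σ).2.2
        rw [Finset.card_singleton] at h1
        omega
  intro s hs
  rcases s.eq_empty_or_nonempty with rfl | hne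
  · simpa using K2.empty_mem
  · have htne : (s.image (fun a => a.1)).Nonempty := hne.image _
    set σ : K1.SdVert := ⟨s.image (fun a => a.1), hs, htne⟩ with hσ
    have hsub : s.image (fun a => (F a).1) ⊆ (φ σ).1 := by
      intro x hx
      obtain ⟨a, ha, rfl⟩ := Finset.mem_image.1 hx
      exact hmain σ a (Finset.mem_image.2 ⟨a, ha, rfl⟩)
    exact K2.downClosed _ (φ σ).2.1 _ hsub

theorem colorIso_to_complexIso
    {V1 V2 : Type*} [DecidableEq V1] [DecidableEq V2]
    (K1 : AbstractComplex V1) (K2 : AbstractComplex V2)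
    (φ : K1.Sd1 ≃g K2.Sd1)
    (hφ : ∀ v, K2.dimColor (φ v) = K1.dimColor v) :
    ∃ f0 : K1.Vert ≃ K2.Vert, IsComplexIso K1 K2 f0 ∧
      ∀ a : K1.Vert,
        (φ ⟨({a.1} : Finset V1), a.2, Finset.singleton_nonempty a.1⟩).1
          = ({(f0 a).1} : Finset V2) := by
  obtain ⟨F, hF, hFs⟩ := aux_exists K1 K2 φ hφ
  have hφ' : ∀ w, K1.dimColor (φ.symm w) = K2.dimColor w := by
    intro w
    rw [← hφ (φ.symm w), RelIso.apply_symm_apply]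
  obtain ⟨G, hG, hGs⟩ := aux_exists K2 K1 φ.symm hφ'
  have hGF : ∀ a, G (F a) = a := by
    intro a
    have h1 : (⟨({(F a).1} : Finset V2), (F a).2, Finset.singleton_nonempty _⟩ : K2.SdVert)
        = φ ⟨({a.1} : Finset V1), a.2, Finset.singleton_nonempty a.1⟩ :=
      Subtype.ext (hF a).symm
    have h2 := hG (F a)
    rw [h1] at h2
    replace h2 := (congrArg (fun x : K1.SdVert => x.1) (φ.symm_apply_apply _)).symm.trans h2
    exact Subtype.ext (Finset.singleton_injective h2).symm
  have hFG : ∀ b, F (G b) = b := by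
    intro b
    have h1 : (⟨({(G b).1} : Finset V1), (G b).2, Finset.singleton_nonempty _⟩ : K1.SdVert)
        = φ.symm ⟨({b.1} : Finset V2), b.2, Finset.singleton_nonempty b.1⟩ :=
      Subtype.ext (hG b).symm
    have h2 := hF (G b)
    rw [h1] at h2
    replace h2 := (congrArg (fun x : K2.SdVert => x.1) (φ.apply_symm_apply _)).symm.trans h2
    exact Subtype.ext (Finset.singleton_injective h2).symm
  refine ⟨⟨F, G, hGF, hFG⟩, ?_, fun a => hF a⟩
  intro s
  simp only [Equiv.coe_fn_mk]
  constructor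
  · exact hFs s
  · intro h
    have h2 := hGs (s.image F) (by
      rw [Finset.image_image]
      exact h)
    rw [Finset.image_image] at h2
    have heq : s.image ((fun b : K2.Vert => (G b).1) ∘ F) = s.image (fun a => a.1) :=
      Finset.image_congr (fun a _ => by simp [Function.comp, hGF])
    rwa [heq] at h2
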